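/- Let G be a group generated by a finite set X and let 𝓛 ⊆ X* be a regular language (accepted by a finite state automaton with state set 𝓢). Then the image ev(𝓛) of 𝓛 under the evaluation map to G is an r-connected subset of the Cayley graph Γ(G,X) for r = 2|𝓢| + 1: any two elements of ev(𝓛) are joined by an r-path supported in ev(𝓛). -/

import Mathlib

open scoped Pointwise

/-- A positive cone of a group `G`: a subsemigroup `P` such that
`G = P ⊔ P⁻¹ ⊔ {1}` (disjoint union). -/
def IsPositiveCone {G : Type*} [Group G] (P : Set G) : Prop :=
  (∀ a ∈ P, ∀ b ∈ P, a * b ∈ P) ∧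
  (∀ g : G, g ∈ P ∨ g⁻¹ ∈ P ∨ g = 1) ∧
  (∀ g ∈ P, g⁻¹ ∉ P) ∧
  (1 : G) ∉ P

/-- Word length of `g` with respect to the generating set `X`. -/
noncomputable def wordLength {G : Type*} [Group G] (X : Set G) (g : G) : ℕ :=
  sInf {n | ∃ l : List G, (∀ x ∈ l, x ∈ X) ∧ l.length = n ∧ l.prod = g}

/-- Word metric on `G` with respect to `X`. -/
noncomputable def wordDist {G : Type*} [Group G] (X : Set G) (g h : G) : ℕ :=
  wordLength X (g⁻¹ * h)

/-- An `r`-path from `a` to `b` supported in `S` (consecutive word-metric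
distances at most `r`). -/
def IsRPath {G : Type*} [Group G] (X : Set G) (r : ℕ) (S : Set G) (a b : G) : Prop :=
  ∃ l : List G, l ≠ [] ∧ l.head? = some a ∧ l.getLast? = some b ∧
    (∀ x ∈ l, x ∈ S) ∧ l.Chain' (fun u v => wordDist X u v ≤ r)

/-- `S` is `r`-coarsely connected in the Cayley graph `Γ(G,X)`. -/
def CoarselyConnectedWith {G : Type*} [Group G] (X : Set G) (r : ℕ) (S : Set G) : Prop :=
  ∀ a ∈ S, ∀ b ∈ S, IsRPath X r S a b

/-- `X` is a finite symmetric generating set of `G`. -/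
def IsGenSet {G : Type*} [Group G] (X : Set G) : Prop :=
  X.Finite ∧ (∀ x ∈ X, x⁻¹ ∈ X) ∧ Subgroup.closure X = ⊤

/-- A positive cone on a subset `K` of `G` (used for subgroups such as kernels). -/
def IsPositiveConeOn {G : Type*} [Group G] (K P : Set G) : Prop :=
  P ⊆ K ∧ (∀ a ∈ P, ∀ b ∈ P, a * b ∈ P) ∧ (∀ g ∈ K, g ∈ P ∨ g⁻¹ ∈ P ∨ g = 1) ∧
  (∀ g ∈ P, g⁻¹ ∉ P) ∧ (1 : G) ∉ P

/-- The sub-semigroup generated by `S`: nonempty products of elements of `S`. -/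
def SemigroupClosure {G : Type*} [Group G] (S : Set G) : Set G :=
  {g | ∃ l : List G, l ≠ [] ∧ (∀ x ∈ l, x ∈ S) ∧ l.prod = g}

private lemma wordLength_le_of_mem {G : Type*} [Group G] {X : Set G} {l : List G}
    (hl : ∀ x ∈ l, x ∈ X) : wordLength X l.prod ≤ l.length :=
  Nat.sInf_le ⟨l, hl, rfl, rfl⟩

private lemma exists_word_inv {G : Type*} [Group G] {X : Set G}
    (hX : ∀ x ∈ X, x⁻¹ ∈ X) (h : G) (n : ℕ)
    (hw : ∃ l : List G, (∀ x ∈ l, x ∈ X) ∧ l.length = n ∧ l.prod = h) :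
    ∃ l : List G, (∀ x ∈ l, x ∈ X) ∧ l.length = n ∧ l.prod = h⁻¹ := by
  obtain ⟨l, h1, h2, h3⟩ := hw
  refine ⟨(l.map (·⁻¹)).reverse, ?_, by simp [h2], ?_⟩
  · intro x hx
    simp only [List.mem_reverse, List.mem_map] at hx
    obtain ⟨y, hy, rfl⟩ := hx
    exact hX y (h1 y hy)
  · rw [← List.prod_inv_reverse, h3]

private lemma wordLength_inv {G : Type*} [Group G] {X : Set G}
    (hX : ∀ x ∈ X, x⁻¹ ∈ X) (g : G) : wordLength X g⁻¹ = wordLength X g := by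
  unfold wordLength
  congr 1
  ext n
  constructor
  · intro h
    simpa using exists_word_inv hX g⁻¹ n h
  · exact exists_word_inv hX g n

private lemma wordDist_symm {G : Type*} [Group G] {X : Set G}
    (hX : ∀ x ∈ X, x⁻¹ ∈ X) (u v : G) : wordDist X v u = wordDist X u v := by
  unfold wordDist
  rw [← wordLength_inv hX (u⁻¹ * v), mul_inv_rev, inv_inv]

private lemma wordLength_one {G : Type*} [Group G] (X : Set G) : wordLength X 1 = 0 :=
  Nat.le_zero.mp (Nat.sInf_le ⟨[], by simp, rfl, List.prod_nil⟩)

private lemma exists_short_word {G : Type*} {σ : Type} [Fintype σ] (τ : σ → G → σ)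
    (acc : Set σ) (X : Set G) (s : σ) (w : List G) (hw : ∀ x ∈ w, x ∈ X)
    (hacc : w.foldl τ s ∈ acc) :
    ∃ w' : List G, (∀ x ∈ w', x ∈ X) ∧ w'.length < Fintype.card σ ∧ w'.foldl τ s ∈ acc := by
  suffices H : ∀ n (w : List G), w.length ≤ n → (∀ x ∈ w, x ∈ X) → w.foldl τ s ∈ acc →
      ∃ w' : List G, (∀ x ∈ w', x ∈ X) ∧ w'.length < Fintype.card σ ∧ w'.foldl τ s ∈ acc by
    exact H w.length w le_rfl hw hacc
  intro n
  induction n with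
  | zero =>
    intro w hlen hw hacc
    have : w = [] := List.eq_nil_of_length_eq_zero (Nat.le_zero.mp hlen)
    subst this
    exact ⟨[], by simp, by simpa using Fintype.card_pos_iff.mpr ⟨s⟩, hacc⟩
  | succ n ih =>
    intro w hlen hw hacc
    by_cases hshort : w.length < Fintype.card σ
    · exact ⟨w, hw, hshort, hacc⟩
    push_neg at hshort
    have hcard : Fintype.card σ < Fintype.card (Fin (Fintype.card σ + 1)) := by simp
    obtain ⟨i, j, hij, hfij⟩ := Fintype.exists_ne_map_eq_of_card_lt
      (fun i : Fin (Fintype.card σ + 1) => (w.take i).foldl τ s) hcard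
    -- wlog i < j
    wlog hlt : (i : ℕ) < (j : ℕ) generalizing i j
    · exact this j i hij.symm hfij.symm
        (lt_of_le_of_ne (not_lt.mp hlt) (fun h => hij (Fin.ext h.symm)))
    have hjle : (j : ℕ) ≤ w.length := le_trans (Nat.lt_succ_iff.mp j.2) hshort
    set w' := w.take i ++ w.drop j with hw'
    have hlen' : w'.length ≤ n := by
      have : w'.length = i + (w.length - j) := by
        simp [hw', List.length_take, List.length_drop,
          min_eq_left (le_trans (le_of_lt hlt) hjle)]
      omega
    have hmem' : ∀ x ∈ w', x ∈ X := by
      intro x hx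
      rcases List.mem_append.mp hx with h | h
      · exact hw x (List.take_subset _ _ h)
      · exact hw x (List.drop_subset _ _ h)
    have hacc' : w'.foldl τ s ∈ acc := by
      have : w'.foldl τ s = w.foldl τ s := by
        rw [hw', List.foldl_append, hfij]
        conv_rhs => rw [← List.take_append_drop (j : ℕ) w]
        rw [List.foldl_append]
      rwa [this]
    exact ih w' hlen' hmem' hacc'

/-- the evaluation in `G` of a regular language over a finite
symmetric generating set `X` is `(2|𝓢|+1)`-connected in the Cayley graph. -/
theorem stmt_14 {G : Type*} [Group G] (X : Set G) (hX : IsGenSet X)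
    (σ : Type) [Fintype σ] (τ : σ → G → σ) (s0 : σ) (acc : Set σ)
    (L : Set (List G))
    (hL : L = {l : List G | (∀ x ∈ l, x ∈ X) ∧ l.foldl τ s0 ∈ acc}) :
    CoarselyConnectedWith X (2 * Fintype.card σ + 1)
      {g : G | ∃ l ∈ L, l.prod = g} := by
  obtain ⟨-, hXsymm, -⟩ := hX
  subst hL
  set N := Fintype.card σ with hN
  set S : Set G :=
    {g : G | ∃ l ∈ {l : List G | (∀ x ∈ l, x ∈ X) ∧ l.foldl τ s0 ∈ acc}, l.prod = g} with hS
  have hchoice : ∀ s : σ, ∃ w' : List G,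
      (∃ w : List G, (∀ x ∈ w, x ∈ X) ∧ w.foldl τ s ∈ acc) →
      ((∀ x ∈ w', x ∈ X) ∧ w'.length < N ∧ w'.foldl τ s ∈ acc) := by
    intro s
    by_cases h : ∃ w : List G, (∀ x ∈ w, x ∈ X) ∧ w.foldl τ s ∈ acc
    · obtain ⟨w, hw1, hw2⟩ := h
      obtain ⟨w', h1, h2, h3⟩ := exists_short_word τ acc X s w hw1 hw2
      exact ⟨w', fun _ => ⟨h1, h2, h3⟩⟩
    · exact ⟨[], fun h' => absurd h' h⟩
  choose short hshort using hchoice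
  -- membership of completed prefixes in S
  have hmemS : ∀ u : List G, (∀ x ∈ u, x ∈ X) →
      (∃ w : List G, (∀ x ∈ w, x ∈ X) ∧ w.foldl τ (u.foldl τ s0) ∈ acc) →
      (u ++ short (u.foldl τ s0)).prod ∈ S := by
    intro u hu hr
    obtain ⟨h1, h2, h3⟩ := hshort _ hr
    refine ⟨u ++ short (u.foldl τ s0), ⟨?_, ?_⟩, rfl⟩
    · intro x hx
      rcases List.mem_append.mp hx with h | h
      · exact hu x h
      · exact h1 x h
    · rw [List.foldl_append]; exact h3
  -- the main induction: a chain from a completed word down to the base point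
  have main : ∀ u : List G, (∀ x ∈ u, x ∈ X) →
      (∃ w : List G, (∀ x ∈ w, x ∈ X) ∧ w.foldl τ (u.foldl τ s0) ∈ acc) →
      ∃ l : List G, l ≠ [] ∧
        l.head? = some (u ++ short (u.foldl τ s0)).prod ∧
        l.getLast? = some (short s0).prod ∧
        (∀ g ∈ l, g ∈ S) ∧
        l.Chain' (fun a b => wordDist X a b ≤ 2 * N + 1) := by
    intro u
    induction u using List.reverseRecOn with
    | nil =>
      intro _ hreach
      refine ⟨[(short s0).prod], by simp, by simp, by simp, ?_, List.isChain_singleton _⟩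
      intro g hg
      simp only [List.mem_singleton] at hg
      subst hg
      simpa using hmemS [] (by simp) hreach
    | append_singleton u' x ih =>
      intro hux hreach
      have hx : x ∈ X := hux x (by simp)
      have hu' : ∀ y ∈ u', y ∈ X := fun y hy => hux y (by simp [hy])
      have hs2 : (u' ++ [x]).foldl τ s0 = τ (u'.foldl τ s0) x := by
        rw [List.foldl_append]; rfl
      obtain ⟨hw1, hw2, hw3⟩ := hshort _ hreach
      have hreach1 : ∃ w : List G, (∀ y ∈ w, y ∈ X) ∧
          w.foldl τ (u'.foldl τ s0) ∈ acc := by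
        refine ⟨x :: short ((u' ++ [x]).foldl τ s0), ?_, ?_⟩
        · intro y hy
          rcases List.mem_cons.mp hy with h | h
          · exact h ▸ hx
          · exact hw1 y h
        · rw [List.foldl_cons, ← hs2]; exact hw3
      obtain ⟨l', hne, hhead, hlast, hmem, hchain⟩ := ih hu' hreach1
      obtain ⟨hw1', hw2', hw3'⟩ := hshort _ hreach1
      refine ⟨((u' ++ [x]) ++ short ((u' ++ [x]).foldl τ s0)).prod :: l',
        by simp, rfl, ?_, ?_, ?_⟩
      · cases l' with
        | nil => exact absurd rfl hne
        | cons b t => rw [List.getLast?_cons_cons]; exact hlast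
      · intro g hg
        rcases List.mem_cons.mp hg with h | h
        · subst h; exact hmemS (u' ++ [x]) hux hreach
        · exact hmem g h
      · rw [List.Chain', List.isChain_cons]
        refine ⟨?_, hchain⟩
        intro b hb
        rw [hhead, Option.mem_some_iff] at hb
        subst hb
        -- distance bound
        set w2 := short ((u' ++ [x]).foldl τ s0) with hw2def
        set w1 := short (u'.foldl τ s0) with hw1def
        have hword : ∀ y ∈ ((w2.map (·⁻¹)).reverse ++ [x⁻¹]) ++ w1, y ∈ X := by
          intro y hy
          rcases List.mem_append.mp hy with h | h
          · rcases List.mem_append.mp h with h' | h'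
            · simp only [List.mem_reverse, List.mem_map] at h'
              obtain ⟨z, hz, rfl⟩ := h'
              exact hXsymm z (hw1 z hz)
            · simp only [List.mem_singleton] at h'
              exact h' ▸ hXsymm x hx
          · exact hw1' y h
        have hlenw : (((w2.map (·⁻¹)).reverse ++ [x⁻¹]) ++ w1).length ≤ 2 * N + 1 := by
          simp only [List.length_append, List.length_reverse, List.length_map,
            List.length_singleton]
          omega
        have hprod : (((w2.map (·⁻¹)).reverse ++ [x⁻¹]) ++ w1).prod =
            (((u' ++ [x]) ++ w2).prod)⁻¹ * ((u' ++ w1).prod) := by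
          simp only [List.prod_append, List.prod_cons, List.prod_nil, mul_one,
            List.prod_singleton, mul_inv_rev]
          rw [← List.prod_inv_reverse]
          group
        show wordDist X (((u' ++ [x]) ++ w2).prod) ((u' ++ w1).prod) ≤ 2 * N + 1
        unfold wordDist
        rw [← hprod]
        exact le_trans (wordLength_le_of_mem hword) hlenw
  -- now assemble the two halves
  rintro a ⟨u, ⟨hu1, hu2⟩, rfl⟩ b ⟨v, ⟨hv1, hv2⟩, rfl⟩
  have hru : ∃ w : List G, (∀ x ∈ w, x ∈ X) ∧ w.foldl τ (u.foldl τ s0) ∈ acc :=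
    ⟨[], by simp, hu2⟩
  have hrv : ∃ w : List G, (∀ x ∈ w, x ∈ X) ∧ w.foldl τ (v.foldl τ s0) ∈ acc :=
    ⟨[], by simp, hv2⟩
  obtain ⟨lu, hune, huhead, hulast, humem, huchain⟩ := main u hu1 hru
  obtain ⟨lv, hvne, hvhead, hvlast, hvmem, hvchain⟩ := main v hv1 hrv
  obtain ⟨hwu1, hwu2, hwu3⟩ := hshort _ hru
  obtain ⟨hwv1, hwv2, hwv3⟩ := hshort _ hrv
  refine ⟨u.prod :: (lu ++ (lv.reverse ++ [v.prod])), by simp, rfl, ?_, ?_, ?_⟩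
  · have : u.prod :: (lu ++ (lv.reverse ++ [v.prod])) =
        (u.prod :: (lu ++ lv.reverse)) ++ [v.prod] := by simp
    rw [this, List.getLast?_concat]
  · intro g hg
    rcases List.mem_cons.mp hg with h | h
    · exact h ▸ ⟨u, ⟨hu1, hu2⟩, rfl⟩
    rcases List.mem_append.mp h with h | h
    · exact humem g h
    rcases List.mem_append.mp h with h | h
    · exact hvmem g (List.mem_reverse.mp h)
    · simp only [List.mem_singleton] at h
      exact h ▸ ⟨v, ⟨hv1, hv2⟩, rfl⟩
  · rw [List.Chain', List.isChain_cons]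
    constructor
    · -- step from u.prod to head of lu
      intro b hb
      cases lu with
      | nil => exact absurd rfl hune
      | cons c t =>
        simp only [List.cons_append, List.head?_cons, Option.mem_some_iff,
          Option.some_inj] at huhead hb
        subst hb
        rw [huhead]
        unfold wordDist
        have heq : (u.prod)⁻¹ * (u ++ short (u.foldl τ s0)).prod =
            (short (u.foldl τ s0)).prod := by
          simp [List.prod_append]
        rw [heq]
        exact le_trans (wordLength_le_of_mem hwu1) (by omega)
    · rw [List.isChain_append]
      refine ⟨huchain, ?_, ?_⟩
      · rw [List.isChain_append]
        refine ⟨?_, List.isChain_singleton _, ?_⟩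
        · rw [List.isChain_reverse]
          exact List.IsChain.imp (fun a b h => le_trans (le_of_eq (wordDist_symm hXsymm a b)) h) hvchain
        · -- step from head of lv (= last of reverse) to v.prod
          intro y hy z hz
          rw [List.getLast?_reverse, hvhead, Option.mem_some_iff] at hy
          simp only [List.head?_cons, Option.mem_some_iff] at hz
          subst hy; subst hz
          -- wordDist ((v ++ w).prod) (v.prod) ≤ 2N+1
          unfold wordDist
          have hprod : ((v ++ short (v.foldl τ s0)).prod)⁻¹ * v.prod =
              ((short (v.foldl τ s0)).prod)⁻¹ := by
            simp only [List.prod_append, mul_inv_rev]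
            group
          rw [hprod, wordLength_inv hXsymm]
          exact le_trans (wordLength_le_of_mem hwv1) (by omega)
      · -- junction: last of lu = base point = head of (lv.reverse ++ [v.prod])
        intro y hy z hz
        rw [hulast, Option.mem_some_iff] at hy
        subst hy
        rw [List.head?_append, List.head?_reverse, hvlast] at hz
        simp only [Option.some_or, Option.mem_some_iff] at hz
        subst hz
        unfold wordDist
        rw [inv_mul_cancel, wordLength_one]
        omega
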